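/- Under the setup of the previous definitions (u sorted nonincreasingly, u₀ > 0, γ ≥ 1), for any S ⊊ [n] and j ∈ [n]\S, the marginal gain satisfies ρ_j(S) := Φ(S∪{j}) − Φ(S) = u₀·(u_j − u_{k_S})⁺ / ((u(S^γ) + (u_j − u_{k_S})⁺ + u₀)·(u(S^γ) + u₀)), where (a)⁺ = max{a,0}. -/

import Mathlib

open Finset

/-- The probability function `Φ(S) = max { u(S')/(u(S')+u₀) : S' ⊆ S, |S'| ≤ γ }`. -/
noncomputable def Phi (γ : ℕ) (u : ℕ → ℝ) (u0 : ℝ) (S : Finset ℕ) : ℝ :=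
  ((S.powerset.filter fun S' => S'.card ≤ γ).image
      fun S' => (∑ j ∈ S', u j) / ((∑ j ∈ S', u j) + u0)).max'
    (Finset.Nonempty.image ⟨∅, Finset.mem_filter.mpr ⟨Finset.empty_mem_powerset S, by simp⟩⟩ _)

/-- `k_S = n+1` if `|S| ≤ γ-1`, otherwise the `γ`-th smallest element of `S`. -/
def kS (γ n : ℕ) (S : Finset ℕ) : ℕ :=
  if S.card ≤ γ - 1 then n + 1 else (S.sort (· ≤ ·)).getD (γ - 1) 0

/-- `S^γ = S ∩ [k_S]`. -/
def Sgamma (γ n : ℕ) (S : Finset ℕ) : Finset ℕ :=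
  S ∩ Finset.Icc 1 (kS γ n S)

lemma kS_spec (γ n : ℕ) (hγ : 1 ≤ γ) (S : Finset ℕ) (hcard : γ ≤ S.card) :
    kS γ n S ∈ S ∧ (S.filter (fun x => x ≤ kS γ n S)).card = γ := by
  have hnot : ¬ S.card ≤ γ - 1 := by omega
  set l := S.sort (· ≤ ·) with hl
  have hlen : l.length = S.card := Finset.length_sort _
  have hlt : γ - 1 < l.length := by omega
  have hk : kS γ n S = l[γ-1] := by
    rw [kS, if_neg hnot, List.getD_eq_getElem?_getD, List.getElem?_eq_getElem hlt]
    rfl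
  have hsorted : l.Pairwise (· < ·) := List.sortedLT_iff_pairwise.mp (Finset.sortedLT_sort S)
  have hktake : kS γ n S ∈ l.take γ := by
    rw [hk]
    have h1 : γ - 1 < (l.take γ).length := by simp [hlen]; omega
    have h2 : (l.take γ)[γ-1]'h1 = l[γ-1] := List.getElem_take
    rw [← h2]
    exact List.getElem_mem h1
  have hmemS : kS γ n S ∈ S := by
    rw [← Finset.mem_sort (· ≤ ·)]
    exact List.mem_of_mem_take hktake
  refine ⟨hmemS, ?_⟩
  have htake_le : ∀ x ∈ l.take γ, x ≤ kS γ n S := by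
    intro x hx
    have hγeq : γ = (γ - 1) + 1 := by omega
    rw [hγeq, List.take_succ] at hx
    rcases List.mem_append.mp hx with h | h
    · have hkd : kS γ n S ∈ l.drop (γ - 1) := by
        have h0 : 0 < (l.drop (γ-1)).length := by simp; omega
        have h3 : (l.drop (γ-1))[0]'h0 = l[(γ-1) + 0] := List.getElem_drop
        rw [hk]
        have h4 : l[(γ-1)+0] = l[γ-1] := by congr 1
        rw [← h4, ← h3]
        exact List.getElem_mem h0
      exact le_of_lt (hsorted.rel_of_mem_take_of_mem_drop h hkd)
    · simp [List.getElem?_eq_getElem hlt] at h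
      omega
  have hdrop_gt : ∀ x ∈ l.drop γ, ¬ x ≤ kS γ n S := by
    intro x hx
    exact not_le_of_gt (hsorted.rel_of_mem_take_of_mem_drop hktake hx)
  have hfil : l.filter (fun x => decide (x ≤ kS γ n S)) = l.take γ := by
    conv_lhs => rw [← List.take_append_drop γ l]
    rw [List.filter_append, List.filter_eq_self.mpr (fun a ha => by simpa using htake_le a ha),
      List.filter_eq_nil_iff.mpr (fun a ha => by simpa using hdrop_gt a ha), List.append_nil]
  have hnd : l.Nodup := S.sort_nodup _
  have h1 : S.filter (fun x => x ≤ kS γ n S) = (l.filter (fun x => decide (x ≤ kS γ n S))).toFinset := by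
    rw [List.toFinset_filter, Finset.sort_toFinset]
    simp
  rw [h1, List.toFinset_card_of_nodup (hnd.filter _), hfil, List.length_take]
  omega

lemma kS_unique (γ n : ℕ) (hγ : 1 ≤ γ) (S : Finset ℕ) (hcard : γ ≤ S.card)
    (k : ℕ) (hk : k ∈ S) (hc : (S.filter (fun x => x ≤ k)).card = γ) :
    k = kS γ n S := by
  obtain ⟨hmem, hcard'⟩ := kS_spec γ n hγ S hcard
  by_contra hne
  rcases lt_or_gt_of_ne hne with h | h
  · have hss : S.filter (fun x => x ≤ k) ⊂ S.filter (fun x => x ≤ kS γ n S) := by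
      refine Finset.ssubset_iff_of_subset (Finset.monotone_filter_right S (fun x _ (hx : x ≤ k) => by omega)) |>.mpr ?_
      exact ⟨kS γ n S, Finset.mem_filter.mpr ⟨hmem, le_refl _⟩, fun hx => by
        simp only [Finset.mem_filter] at hx; omega⟩
    have := Finset.card_lt_card hss
    omega
  · have hss : S.filter (fun x => x ≤ kS γ n S) ⊂ S.filter (fun x => x ≤ k) := by
      refine Finset.ssubset_iff_of_subset (Finset.monotone_filter_right S (fun x _ (hx : x ≤ kS γ n S) => by omega)) |>.mpr ?_
      exact ⟨k, Finset.mem_filter.mpr ⟨hk, le_refl _⟩, fun hx => by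
        simp only [Finset.mem_filter] at hx; omega⟩
    have := Finset.card_lt_card hss
    omega

lemma Sgamma_eq_filter (γ n : ℕ) (S : Finset ℕ) (hS : S ⊆ Finset.Icc 1 n) :
    Sgamma γ n S = S.filter (fun x => x ≤ kS γ n S) := by
  ext x
  simp only [Sgamma, Finset.mem_inter, Finset.mem_Icc, Finset.mem_filter]
  constructor
  · rintro ⟨h1, _, h3⟩; exact ⟨h1, h3⟩
  · rintro ⟨h1, h2⟩
    exact ⟨h1, (Finset.mem_Icc.mp (hS h1)).1, h2⟩

/-- If `|S| ≤ γ - 1` then `kS = n+1` and `Sgamma S = S`. -/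
lemma Sgamma_small (γ n : ℕ) (S : Finset ℕ) (hS : S ⊆ Finset.Icc 1 n)
    (hcard : S.card ≤ γ - 1) : Sgamma γ n S = S := by
  rw [Sgamma_eq_filter γ n S hS]
  apply Finset.filter_true_of_mem
  intro x hx
  have := (Finset.mem_Icc.mp (hS hx)).2
  rw [kS, if_pos hcard]
  omega

/-- Cardinality of `Sgamma` is at most `γ`. -/
lemma Sgamma_card_le (γ n : ℕ) (hγ : 1 ≤ γ) (S : Finset ℕ) (hS : S ⊆ Finset.Icc 1 n) :
    (Sgamma γ n S).card ≤ γ := by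
  by_cases h : S.card ≤ γ - 1
  · rw [Sgamma_small γ n S hS h]; omega
  · rw [Sgamma_eq_filter γ n S hS, (kS_spec γ n hγ S (by omega)).2]

lemma Sgamma_subset (γ n : ℕ) (S : Finset ℕ) : Sgamma γ n S ⊆ S :=
  Finset.inter_subset_left

/-- Claim A: `Sgamma` maximizes the sum among small subsets. -/
lemma sum_le_sum_Sgamma (n γ : ℕ) (hγ : 1 ≤ γ) (u : ℕ → ℝ)
    (hnn : ∀ j ∈ Finset.Icc 1 n, 0 ≤ u j)
    (hmono : ∀ j ∈ Finset.Icc 1 (n+1), ∀ k ∈ Finset.Icc 1 (n+1), j ≤ k → u k ≤ u j)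
    (S : Finset ℕ) (hS : S ⊆ Finset.Icc 1 n)
    (S' : Finset ℕ) (hsub : S' ⊆ S) (hc : S'.card ≤ γ) :
    ∑ i ∈ S', u i ≤ ∑ i ∈ Sgamma γ n S, u i := by
  by_cases h : S.card ≤ γ - 1
  · rw [Sgamma_small γ n S hS h]
    exact Finset.sum_le_sum_of_subset_of_nonneg hsub (fun i hi _ => hnn i (hS hi))
  · have hcard : γ ≤ S.card := by omega
    obtain ⟨hkmem, hkcard⟩ := kS_spec γ n hγ S hcard
    set k := kS γ n S with hkdef
    have hkIcc : k ∈ Finset.Icc 1 n := hS hkmem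
    obtain ⟨hk1, hk2⟩ := Finset.mem_Icc.mp hkIcc
    have huk : 0 ≤ u k := hnn k hkIcc
    set G := Sgamma γ n S with hGdef
    have hGf : G = S.filter (fun x => x ≤ k) := Sgamma_eq_filter γ n S hS
    have hGcard : G.card = γ := by rw [hGf]; exact hkcard
    -- split sums
    have hsplit1 : ∑ i ∈ S', u i = ∑ i ∈ S' ∩ G, u i + ∑ i ∈ S' \ G, u i := by
      rw [Finset.sum_inter_add_sum_sdiff]
    have hsplit2 : ∑ i ∈ G, u i = ∑ i ∈ G ∩ S', u i + ∑ i ∈ G \ S', u i := by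
      rw [Finset.sum_inter_add_sum_sdiff]
    rw [hsplit1, hsplit2, Finset.inter_comm]
    gcongr ?_ + ?_
    · rfl
    have h1 : ∑ i ∈ S' \ G, u i ≤ (S' \ G).card • u k := by
      apply Finset.sum_le_card_nsmul
      intro x hx
      obtain ⟨hxS', hxG⟩ := Finset.mem_sdiff.mp hx
      have hxS : x ∈ S := hsub hxS'
      have hxk : ¬ x ≤ k := by
        intro hle
        exact hxG (hGf ▸ Finset.mem_filter.mpr ⟨hxS, hle⟩)
      have hxIcc := Finset.mem_Icc.mp (hS hxS)
      exact hmono k (Finset.mem_Icc.mpr ⟨hk1, by omega⟩)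
        x (Finset.mem_Icc.mpr ⟨hxIcc.1, by omega⟩) (by omega)
    have h2 : (G \ S').card • u k ≤ ∑ i ∈ G \ S', u i := by
      apply Finset.card_nsmul_le_sum
      intro x hx
      obtain ⟨hxG, _⟩ := Finset.mem_sdiff.mp hx
      have hxG' := hxG
      rw [hGf] at hxG'
      have hxk : x ≤ k := (Finset.mem_filter.mp hxG').2
      have hxS : x ∈ S := Sgamma_subset γ n S hxG
      have hxIcc := Finset.mem_Icc.mp (hS hxS)
      exact hmono x (Finset.mem_Icc.mpr ⟨hxIcc.1, by omega⟩)
        k (Finset.mem_Icc.mpr ⟨hk1, by omega⟩) hxk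
    have hcardle : (S' \ G).card ≤ (G \ S').card := by
      have e1 := Finset.card_sdiff_add_card_inter S' G
      have e2 := Finset.card_sdiff_add_card_inter G S'
      have e3 : (S' ∩ G).card = (G ∩ S').card := by rw [Finset.inter_comm]
      omega
    calc ∑ i ∈ S' \ G, u i ≤ (S' \ G).card • u k := h1
      _ ≤ (G \ S').card • u k := by
          exact nsmul_le_nsmul_left huk hcardle
      _ ≤ ∑ i ∈ G \ S', u i := h2

/-- Phi formula. -/
lemma Phi_eq (n γ : ℕ) (hγ : 1 ≤ γ) (u : ℕ → ℝ) (u0 : ℝ) (hu0 : 0 < u0)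
    (hnn : ∀ j ∈ Finset.Icc 1 n, 0 ≤ u j)
    (hmono : ∀ j ∈ Finset.Icc 1 (n+1), ∀ k ∈ Finset.Icc 1 (n+1), j ≤ k → u k ≤ u j)
    (S : Finset ℕ) (hS : S ⊆ Finset.Icc 1 n) :
    Phi γ u u0 S = (∑ i ∈ Sgamma γ n S, u i) / ((∑ i ∈ Sgamma γ n S, u i) + u0) := by
  set m := ∑ i ∈ Sgamma γ n S, u i with hm
  have hmnn : 0 ≤ m := Finset.sum_nonneg (fun i hi => hnn i (hS (Sgamma_subset γ n S hi)))
  apply le_antisymm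
  · apply Finset.max'_le
    intro y hy
    obtain ⟨S', hS', rfl⟩ := Finset.mem_image.mp hy
    obtain ⟨hpow, hcard⟩ := Finset.mem_filter.mp hS'
    have hsub : S' ⊆ S := Finset.mem_powerset.mp hpow
    have hnn' : 0 ≤ ∑ i ∈ S', u i := Finset.sum_nonneg (fun i hi => hnn i (hS (hsub hi)))
    have hle : ∑ i ∈ S', u i ≤ m := sum_le_sum_Sgamma n γ hγ u hnn hmono S hS S' hsub hcard
    rw [div_le_div_iff₀ (by positivity) (by positivity)]
    nlinarith
  · apply Finset.le_max'
    apply Finset.mem_image.mpr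
    refine ⟨Sgamma γ n S, Finset.mem_filter.mpr ⟨Finset.mem_powerset.mpr (Sgamma_subset γ n S),
      Sgamma_card_le γ n hγ S hS⟩, rfl⟩

/-- Sum over `Sgamma` of `S ∪ {j}`. -/
lemma sum_Sgamma_union (n γ : ℕ) (hγ : 1 ≤ γ) (u : ℕ → ℝ)
    (hnn : ∀ j ∈ Finset.Icc 1 n, 0 ≤ u j) (hn1 : u (n + 1) = 0)
    (hmono : ∀ j ∈ Finset.Icc 1 (n+1), ∀ k ∈ Finset.Icc 1 (n+1), j ≤ k → u k ≤ u j)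
    (S : Finset ℕ) (hS : S ⊆ Finset.Icc 1 n)
    (j : ℕ) (hj : j ∈ Finset.Icc 1 n) (hjS : j ∉ S) :
    ∑ i ∈ Sgamma γ n (S ∪ {j}), u i
      = (∑ i ∈ Sgamma γ n S, u i) + max (u j - u (kS γ n S)) 0 := by
  set T := S ∪ {j} with hTdef
  have hT : T ⊆ Finset.Icc 1 n := by
    intro x hx
    rcases Finset.mem_union.mp hx with h | h
    · exact hS h
    · rw [Finset.mem_singleton.mp h]; exact hj
  have hTins : T = insert j S := by
    rw [hTdef]; ext x; simp [or_comm]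
  have hTcard : T.card = S.card + 1 := by
    rw [hTins, Finset.card_insert_of_notMem hjS]
  obtain ⟨hj1, hj2⟩ := Finset.mem_Icc.mp hj
  by_cases hsmall : S.card ≤ γ - 1
  · have hkSval : kS γ n S = n + 1 := by rw [kS, if_pos hsmall]
    have hmax : max (u j - u (kS γ n S)) 0 = u j := by
      rw [hkSval, hn1, sub_zero]
      exact max_eq_left (hnn j hj)
    rw [hmax, Sgamma_small γ n S hS hsmall]
    have hall : ∀ x ∈ T, x ≤ kS γ n T := by
      by_cases hTs : T.card ≤ γ - 1
      · intro x hx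
        rw [kS, if_pos hTs]
        have := (Finset.mem_Icc.mp (hT hx)).2
        omega
      · have hTc : γ ≤ T.card := by omega
        obtain ⟨hm, hc⟩ := kS_spec γ n hγ T hTc
        have hTcard' : T.card = γ := by omega
        have heq : T.filter (fun x => x ≤ kS γ n T) = T :=
          Finset.eq_of_subset_of_card_le (Finset.filter_subset _ _) (by omega)
        intro x hx
        rw [← heq] at hx
        exact (Finset.mem_filter.mp hx).2
    have hST : Sgamma γ n T = T := by
      rw [Sgamma_eq_filter γ n T hT]
      exact Finset.filter_true_of_mem hall
    rw [hST, hTins, Finset.sum_insert hjS, add_comm]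
  · have hScard : γ ≤ S.card := by omega
    obtain ⟨hkmem, hkcard⟩ := kS_spec γ n hγ S hScard
    set k := kS γ n S with hk
    have hTc : γ ≤ T.card := by omega
    have hjk : j ≠ k := fun h => hjS (h ▸ hkmem)
    set G := S.filter (fun x => x ≤ k) with hG
    have hGS : Sgamma γ n S = G := Sgamma_eq_filter γ n S hS
    have hkG : k ∈ G := Finset.mem_filter.mpr ⟨hkmem, le_rfl⟩
    have hjG : j ∉ G := fun h => hjS (Finset.mem_filter.mp h).1
    have hGsub : G ⊆ S := Finset.filter_subset _ _
    obtain ⟨hk1, hk2⟩ := Finset.mem_Icc.mp (hS hkmem)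
    rcases lt_or_gt_of_ne hjk with hlt | hgt
    · -- j < k
      have hujk : u k ≤ u j :=
        hmono j (Finset.mem_Icc.mpr ⟨hj1, by omega⟩) k (Finset.mem_Icc.mpr ⟨hk1, by omega⟩)
          (le_of_lt hlt)
      have hmax : max (u j - u k) 0 = u j - u k := max_eq_left (by linarith)
      set E := (insert j G).erase k with hE
      have hkins : k ∈ insert j G := Finset.mem_insert_of_mem hkG
      have hEcard : E.card = γ := by
        rw [hE, Finset.card_erase_of_mem hkins, Finset.card_insert_of_notMem hjG, hkcard]
        omega
      have hEne : E.Nonempty := Finset.card_pos.mp (by omega)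
      have hle : ∀ x ∈ insert j G, x ≤ k := by
        intro x hx
        rcases Finset.mem_insert.mp hx with h | h
        · omega
        · exact (Finset.mem_filter.mp h).2
      set c := E.max' hEne with hc
      have hcE : c ∈ E := Finset.max'_mem _ _
      have hck : c < k :=
        lt_of_le_of_ne (hle c (Finset.erase_subset _ _ hcE)) (Finset.ne_of_mem_erase hcE)
      have hcT : c ∈ T := by
        rcases Finset.mem_insert.mp (Finset.erase_subset _ _ hcE) with h | h
        · rw [hTins, h]; exact Finset.mem_insert_self _ _
        · exact Finset.mem_union_left _ (hGsub h)
      have hfil : T.filter (fun x => x ≤ c) = E := by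
        ext x
        constructor
        · intro hx
          obtain ⟨hxT, hxc⟩ := Finset.mem_filter.mp hx
          have hxk : x < k := by omega
          refine Finset.mem_erase.mpr ⟨by omega, ?_⟩
          rcases Finset.mem_union.mp hxT with h | h
          · exact Finset.mem_insert_of_mem (Finset.mem_filter.mpr ⟨h, by omega⟩)
          · rw [Finset.mem_singleton.mp h]; exact Finset.mem_insert_self _ _
        · intro hx
          refine Finset.mem_filter.mpr ⟨?_, Finset.le_max' E x hx⟩
          rcases Finset.mem_insert.mp (Finset.erase_subset _ _ hx) with h | h
          · rw [hTins, h]; exact Finset.mem_insert_self _ _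
          · exact Finset.mem_union_left _ (hGsub h)
      have hkT : c = kS γ n T :=
        kS_unique γ n hγ T hTc c hcT (by rw [hfil, hEcard])
      rw [Sgamma_eq_filter γ n T hT, ← hkT, hfil, hE,
        Finset.sum_erase_eq_sub hkins, Finset.sum_insert hjG, hGS, hmax]
      ring
    · -- k < j
      have hujk : u j ≤ u k :=
        hmono k (Finset.mem_Icc.mpr ⟨hk1, by omega⟩) j (Finset.mem_Icc.mpr ⟨hj1, by omega⟩)
          (le_of_lt hgt)
      have hmax : max (u j - u k) 0 = 0 := max_eq_right (by linarith)
      have hfil : T.filter (fun x => x ≤ k) = G := by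
        ext x
        constructor
        · intro hx
          obtain ⟨hxT, hxk⟩ := Finset.mem_filter.mp hx
          rcases Finset.mem_union.mp hxT with h | h
          · exact Finset.mem_filter.mpr ⟨h, hxk⟩
          · have := Finset.mem_singleton.mp h; omega
        · intro hx
          obtain ⟨hxS, hxk⟩ := Finset.mem_filter.mp hx
          exact Finset.mem_filter.mpr ⟨Finset.mem_union_left _ hxS, hxk⟩
      have hkT : k = kS γ n T :=
        kS_unique γ n hγ T hTc k (Finset.mem_union_left _ hkmem) (by rw [hfil]; exact hkcard)
      rw [Sgamma_eq_filter γ n T hT, ← hkT, hfil, hGS, hmax, add_zero]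

theorem stmt_2 (n γ : ℕ) (hγ : 1 ≤ γ) (u : ℕ → ℝ) (u0 : ℝ) (hu0 : 0 < u0)
    (hnn : ∀ j ∈ Finset.Icc 1 n, 0 ≤ u j) (hn1 : u (n + 1) = 0)
    (hmono : ∀ j ∈ Finset.Icc 1 (n+1), ∀ k ∈ Finset.Icc 1 (n+1), j ≤ k → u k ≤ u j)
    (S : Finset ℕ) (hS : S ⊆ Finset.Icc 1 n) (hSne : S ≠ Finset.Icc 1 n)
    (j : ℕ) (hj : j ∈ Finset.Icc 1 n) (hjS : j ∉ S) :
    Phi γ u u0 (S ∪ {j}) - Phi γ u u0 S =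
      u0 * max (u j - u (kS γ n S)) 0 /
        (((∑ i ∈ Sgamma γ n S, u i) + max (u j - u (kS γ n S)) 0 + u0) *
          ((∑ i ∈ Sgamma γ n S, u i) + u0)) := by
  have hT : S ∪ {j} ⊆ Finset.Icc 1 n := by
    intro x hx
    rcases Finset.mem_union.mp hx with h | h
    · exact hS h
    · rw [Finset.mem_singleton.mp h]; exact hj
  rw [Phi_eq n γ hγ u u0 hu0 hnn hmono S hS, Phi_eq n γ hγ u u0 hu0 hnn hmono _ hT,
    sum_Sgamma_union n γ hγ u hnn hn1 hmono S hS j hj hjS]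
  set m := ∑ i ∈ Sgamma γ n S, u i with hm
  have hmnn : 0 ≤ m := Finset.sum_nonneg (fun i hi => hnn i (hS (Sgamma_subset γ n S hi)))
  set d := max (u j - u (kS γ n S)) 0 with hd
  have hdnn : 0 ≤ d := le_max_right _ _
  field_simp
  ring
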